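/- On the singular set {|α|² = |β|²}, the inner products of third derivatives of f = AA* with the dual g = Ae₃A* satisfy: ⟨f''',g⟩ = -(αβ/(2|α|²))λ', ⟨f''_z̄,g⟩ = λ'/2, ⟨f'_z̄z̄,g⟩ = λ_z̄/2, ⟨f_z̄z̄z̄,g⟩ = -(ᾱβ̄/(2|α|²))λ_z̄, where λ' = α'ᾱ - β'β̄ and λ_z̄ = α·conj(α') - β·conj(β'). -/

import Mathlib

open Matrix Complex ComplexConjugate

noncomputable def e2 : Matrix (Fin 2) (Fin 2) ℂ := !![0, Complex.I; -Complex.I, 0]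

def e3 : Matrix (Fin 2) (Fin 2) ℂ := !![1, 0; 0, -1]

/-- Complex-bilinear extension `⟨X,Y⟩ = -(1/2)·trace(X e₂ ᵗY e₂)` of the
Lorentzian inner product `-(1/2)·trace(X e₂ Y e₂)` on Hermitian matrices. -/
noncomputable def ip (X Y : Matrix (Fin 2) (Fin 2) ℂ) : ℂ :=
  -(1/2 : ℂ) * (X * e2 * Yᵀ * e2).trace

lemma e2_adj (Y : Matrix (Fin 2) (Fin 2) ℂ) : e2 * Yᵀ * e2 = Y.adjugate := by
  rw [Matrix.adjugate_fin_two]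
  ext i j
  fin_cases i <;> fin_cases j <;>
    simp [e2, Matrix.mul_apply, Matrix.vecMul, dotProduct, Fin.sum_univ_two, Fin.isValue] <;> ring_nf <;> simp [Complex.I_sq]

lemma key (A M : Matrix (Fin 2) (Fin 2) ℂ) (hA : A.det = 1) :
    ip (A * M * Aᴴ) (A * e3 * Aᴴ) = (M 0 0 - M 1 1) / 2 := by
  have hAH : Aᴴ.det = 1 := by rw [Matrix.det_conjTranspose, hA, star_one]
  have hadjA : A.adjugate * A = 1 := by rw [Matrix.adjugate_mul, hA, one_smul]
  have hadjAH : Aᴴ * Aᴴ.adjugate = 1 := by rw [Matrix.mul_adjugate, hAH, one_smul]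
  have he3 : e3.adjugate = -e3 := by
    rw [Matrix.adjugate_fin_two]; ext i j; fin_cases i <;> fin_cases j <;> simp [e3]
  have h0 : ip (A * M * Aᴴ) (A * e3 * Aᴴ) =
      -(1/2 : ℂ) * (A * M * Aᴴ * ((A * e3 * Aᴴ).adjugate)).trace := by
    rw [ip, Matrix.mul_assoc (A * M * Aᴴ * e2), Matrix.mul_assoc (A * M * Aᴴ), ← Matrix.mul_assoc e2, e2_adj]
  rw [h0, Matrix.adjugate_mul_distrib, Matrix.adjugate_mul_distrib, he3]
  have h1 : A * M * Aᴴ * (Aᴴ.adjugate * (-e3 * A.adjugate))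
      = A * M * (-e3) * A.adjugate := by
    rw [show A * M * Aᴴ * (Aᴴ.adjugate * (-e3 * A.adjugate))
        = A * M * (Aᴴ * Aᴴ.adjugate) * (-e3) * A.adjugate from by
      simp only [Matrix.mul_assoc], hadjAH, Matrix.mul_one]
  rw [h1, Matrix.trace_mul_comm, show A.adjugate * (A * M * (-e3))
      = (A.adjugate * A) * (M * (-e3)) from by simp only [Matrix.mul_assoc],
    hadjA, Matrix.one_mul]
  simp [Matrix.trace_fin_two, e3, Matrix.mul_apply, Fin.sum_univ_two]
  ring

/-- On the singular set `{|α|² = |β|²}` (`det A = 1`, `α ≠ 0`), the inner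
products of the third derivatives of `f = AAᴴ` with the dual `g = Ae₃Aᴴ` are
`⟨f''',g⟩ = -(αβ/(2|α|²))λ'`, `⟨f''_z̄,g⟩ = λ'/2`, `⟨f'_z̄z̄,g⟩ = λ_z̄/2`,
`⟨f_z̄z̄z̄,g⟩ = -(ᾱβ̄/(2|α|²))λ_z̄`, with `λ' = α'ᾱ - β'β̄`,
`λ_z̄ = α·conj α' - β·conj β'`. Here `a,b,da,db,dda,ddb` denote the values of
`α,β,α',β',α'',β''` at the point, and the third derivatives are given by their
explicit matrix formulas. -/
theorem inner_products_third_derivatives (A : Matrix (Fin 2) (Fin 2) ℂ)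
    (hA : A.det = 1) (a b da db dda ddb : ℂ) (ha : a ≠ 0)
    (hsing : a * conj a = b * conj b) :
    ip (A * !![da * b + 2 * a * db, dda + a ^ 2 * b;
               ddb + a * b ^ 2, 2 * da * b + a * db] * Aᴴ) (A * e3 * Aᴴ)
      = -(a * b / (2 * (a * conj a))) * (da * conj a - db * conj b) ∧
    ip (A * !![da * conj a, a * (b * conj b); b * (a * conj a), db * conj b]
          * Aᴴ) (A * e3 * Aᴴ)
      = (da * conj a - db * conj b) / 2 ∧
    ip (A * !![a * conj da, conj b * (a * conj a);
               conj a * (b * conj b), b * conj db] * Aᴴ) (A * e3 * Aᴴ)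
      = (a * conj da - b * conj db) / 2 ∧
    ip (A * !![conj (da * b + 2 * a * db), conj ddb + conj a * conj b ^ 2;
               conj dda + conj a ^ 2 * conj b, conj (2 * da * b + a * db)]
          * Aᴴ) (A * e3 * Aᴴ)
      = -(conj a * conj b / (2 * (a * conj a))) * (a * conj da - b * conj db) := by
  have hc : conj a ≠ 0 := by simpa using ha
  have haa : a * conj a ≠ 0 := mul_ne_zero ha hc
  have entry := fun (m00 m01 m10 m11 : ℂ) => key A !![m00, m01; m10, m11] hA
  refine ⟨?_, ?_, ?_, ?_⟩ <;> rw [entry]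
  · simp only [Matrix.of_apply, Matrix.cons_val', Matrix.cons_val_zero, Matrix.cons_val_one, Matrix.empty_val', Matrix.cons_val_fin_one, Matrix.head_cons]
    field_simp
    linear_combination db * hsing
  · simp
  · simp
  · simp only [Matrix.of_apply, Matrix.cons_val', Matrix.cons_val_zero, Matrix.cons_val_one, Matrix.empty_val', Matrix.cons_val_fin_one, Matrix.head_cons, map_add, map_mul, Complex.conj_ofNat]
    field_simp [Complex.conj_ofNat]
    linear_combination (conj db) * hsing
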